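/- Let N be a random variable with the negative binomial distribution with parameters a > 0 and p ∈ (0, 1), i.e. P(N = k) = C(a+k-1, k) (1-p)^a p^k for k = 0, 1, 2, …. Then for every positive integer i, the i-th cumulant of N equals a · Li_{1-i}(p) = a · ∑_{l=1}^{∞} l^{i-1} p^l, which also equals a · ∑_{b=1}^{i} S(i, b) · (b-1)! · (p/(1-p))^b, where S(i, b) is the Stirling number of the second kind. -/

import Mathlib

open MeasureTheory ProbabilityTheory

/-- Stirling numbers of the second kind. -/
def stirling2 : ℕ → ℕ → ℕ
  | 0, 0 => 0 + 1
  | 0, _ + 1 => 0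
  | _ + 1, 0 => 0
  | n + 1, k + 1 => (k + 1) * stirling2 n (k + 1) + stirling2 n k

lemma stirling2_succ_succ (n k : ℕ) :
    stirling2 (n + 1) (k + 1) = (k + 1) * stirling2 n (k + 1) + stirling2 n k := rfl

lemma stirling2_succ_zero (n : ℕ) : stirling2 (n + 1) 0 = 0 := rfl

lemma stirling2_eq_zero : ∀ {n k : ℕ}, n < k → stirling2 n k = 0 := by
  intro n
  induction n with
  | zero => intro k hk; cases k with
    | zero => omega
    | succ k => rfl
  | succ n ih =>
    intro k hk
    cases k with
    | zero => omega
    | succ k =>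
      rw [stirling2_succ_succ, ih (by omega), ih (by omega)]
      simp

lemma nat_mul_descFactorial (n b : ℕ) :
    n * n.descFactorial b = n.descFactorial (b + 1) + b * n.descFactorial b := by
  rcases le_or_gt b n with h | h
  · rw [Nat.descFactorial_succ]
    have h2 : n - b + b = n := Nat.sub_add_cancel h
    calc n * n.descFactorial b = (n - b + b) * n.descFactorial b := by rw [h2]
    _ = (n - b) * n.descFactorial b + b * n.descFactorial b := by rw [add_mul]
  · rw [Nat.descFactorial_eq_zero_iff_lt.2 h, Nat.descFactorial_eq_zero_iff_lt.2 (by omega)]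
    simp

lemma pow_eq_sum_stirling2 (n k : ℕ) :
    n ^ k = ∑ b ∈ Finset.range (k + 1), stirling2 k b * n.descFactorial b := by
  induction k with
  | zero => simp [stirling2]
  | succ k ih =>
    have key : ∑ b ∈ Finset.range (k + 1), stirling2 k b * b * n.descFactorial b
        = ∑ b ∈ Finset.range (k + 1),
            (b + 1) * stirling2 k (b + 1) * n.descFactorial (b + 1) := by
      rw [Finset.sum_range_succ' (fun b => stirling2 k b * b * n.descFactorial b) k]
      rw [Finset.sum_range_succ (fun b => (b + 1) * stirling2 k (b + 1) * n.descFactorial (b + 1)) k]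
      rw [stirling2_eq_zero (Nat.lt_succ_self k)]
      simp [mul_comm, mul_assoc, mul_left_comm]
    calc n ^ (k + 1) = (∑ b ∈ Finset.range (k + 1), stirling2 k b * n.descFactorial b) * n := by
          rw [← ih, pow_succ]
    _ = ∑ b ∈ Finset.range (k + 1), stirling2 k b * (n.descFactorial (b+1) + b * n.descFactorial b) := by
          rw [Finset.sum_mul]
          refine Finset.sum_congr rfl fun b _ => ?_
          rw [mul_assoc, mul_comm (n.descFactorial b) n, nat_mul_descFactorial]
    _ = ∑ b ∈ Finset.range (k + 1), stirling2 k b * n.descFactorial (b+1)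
          + ∑ b ∈ Finset.range (k + 1), stirling2 k b * b * n.descFactorial b := by
          rw [← Finset.sum_add_distrib]
          refine Finset.sum_congr rfl fun b _ => ?_
          ring
    _ = ∑ b ∈ Finset.range (k + 2), stirling2 (k + 1) b * n.descFactorial b := by
          rw [Finset.sum_range_succ' (fun b => stirling2 (k+1) b * n.descFactorial b) (k+1)]
          rw [key, stirling2_succ_zero]
          rw [← Finset.sum_add_distrib]
          simp only [zero_mul, add_zero]
          refine Finset.sum_congr rfl fun b _ => ?_
          rw [stirling2_succ_succ]
          ring

lemma sum_Icc_one_eq_sum_range (f : ℕ → ℝ) (n : ℕ) :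
    ∑ b ∈ Finset.Icc 1 n, f b = ∑ b ∈ Finset.range n, f (b + 1) := by
  rw [← Finset.Ico_add_one_right_eq_Icc, Finset.sum_Ico_eq_sum_range]
  simp [add_comm]

lemma sum_Icc_one_eq_sum_range_nat (f : ℕ → ℕ) (n : ℕ) :
    ∑ b ∈ Finset.Icc 1 n, f b = ∑ b ∈ Finset.range n, f (b + 1) := by
  rw [← Finset.Ico_add_one_right_eq_Icc, Finset.sum_Ico_eq_sum_range]
  simp [add_comm]

lemma succ_pow_pred {i : ℕ} (hi : 1 ≤ i) (l : ℕ) :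
    (l + 1) ^ (i - 1) = ∑ b ∈ Finset.Icc 1 i, stirling2 i b * l.descFactorial (b - 1) := by
  obtain ⟨m, rfl⟩ : ∃ m, i = m + 1 := ⟨i - 1, by omega⟩
  refine Nat.eq_of_mul_eq_mul_left (show 0 < l + 1 by omega) ?_
  have lhs : (l + 1) * (l + 1) ^ (m + 1 - 1) = (l + 1) ^ (m + 1) := by
    simp [pow_succ, mul_comm]
  rw [lhs, pow_eq_sum_stirling2, Finset.sum_range_succ',
    sum_Icc_one_eq_sum_range_nat (fun b => stirling2 (m+1) b * l.descFactorial (b-1)) (m+1),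
    stirling2_succ_zero, Finset.mul_sum]
  simp only [zero_mul, add_zero, Nat.add_sub_cancel]
  refine Finset.sum_congr rfl fun b _ => ?_
  rw [Nat.succ_descFactorial_succ]
  ring

lemma succ_pow_pred_real {i : ℕ} (hi : 1 ≤ i) (l : ℕ) :
    ((l : ℝ) + 1) ^ (i - 1)
      = ∑ b ∈ Finset.Icc 1 i, (stirling2 i b : ℝ) * (l.descFactorial (b - 1) : ℝ) := by
  have := congrArg (fun n : ℕ => (n : ℝ)) (succ_pow_pred hi l)
  push_cast at this
  simpa using this

lemma hasSum_descFactorial_geom {p : ℝ} (hp0 : 0 ≤ p) (hp1 : p < 1) (k : ℕ) :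
    HasSum (fun l : ℕ => (l.descFactorial k : ℝ) * p ^ (l + 1))
      ((k.factorial : ℝ) * (p / (1 - p)) ^ (k + 1)) := by
  have hnorm : ‖p‖ < 1 := by rwa [Real.norm_eq_abs, abs_of_nonneg hp0]
  have h := (hasSum_choose_mul_geometric_of_norm_lt_one k hnorm).mul_left
    ((k.factorial : ℝ) * p ^ (k + 1))
  have hval : (k.factorial : ℝ) * p ^ (k + 1) * (1 / (1 - p) ^ (k + 1))
      = (k.factorial : ℝ) * (p / (1 - p)) ^ (k + 1) := by
    rw [div_pow]; ring
  rw [hval] at h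
  have hinj : Function.Injective (fun n : ℕ => n + k) := add_left_injective k
  have hcomp : HasSum ((fun l : ℕ => (l.descFactorial k : ℝ) * p ^ (l + 1)) ∘ (fun n : ℕ => n + k))
      ((k.factorial : ℝ) * (p / (1 - p)) ^ (k + 1)) := by
    refine h.congr_fun fun n => ?_
    show ((n + k).descFactorial k : ℝ) * p ^ (n + k + 1)
        = (k.factorial : ℝ) * p ^ (k + 1) * (((n + k).choose k : ℝ) * p ^ n)
    rw [Nat.descFactorial_eq_factorial_mul_choose]
    push_cast
    rw [show n + k + 1 = (k + 1) + n by omega, pow_add]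
    ring
  refine (Function.Injective.hasSum_iff hinj ?_).mp hcomp
  intro l hl
  have hlk : l < k := by
    by_contra hc
    have hr : l - k + k = l := by omega
    exact hl ⟨l - k, hr⟩
  rw [Nat.descFactorial_eq_zero_iff_lt.2 hlk]
  simp

lemma tsum_pow_eq_sum_stirling2 {p : ℝ} (hp0 : 0 < p) (hp1 : p < 1) {i : ℕ} (hi : 1 ≤ i) :
    ∑' l : ℕ, ((l : ℝ) + 1) ^ (i - 1) * p ^ (l + 1)
      = ∑ b ∈ Finset.Icc 1 i,
          (stirling2 i b : ℝ) * (Nat.factorial (b - 1)) * (p / (1 - p)) ^ b := by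
  have hterm : ∀ l : ℕ, ((l : ℝ) + 1) ^ (i - 1) * p ^ (l + 1)
      = ∑ b ∈ Finset.Icc 1 i,
          (stirling2 i b : ℝ) * ((l.descFactorial (b - 1) : ℝ) * p ^ (l + 1)) := by
    intro l
    rw [succ_pow_pred_real hi l, Finset.sum_mul]
    exact Finset.sum_congr rfl fun b _ => by ring
  rw [tsum_congr hterm, Summable.tsum_finsetSum (fun b _ =>
    ((hasSum_descFactorial_geom hp0.le hp1 (b - 1)).summable.mul_left _))]
  refine Finset.sum_congr rfl fun b hb => ?_
  have hb1 : 1 ≤ b := (Finset.mem_Icc.1 hb).1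
  rw [tsum_mul_left, (hasSum_descFactorial_geom hp0.le hp1 (b - 1)).tsum_eq]
  have : b - 1 + 1 = b := by omega
  rw [this, mul_assoc]

lemma stirling2_sum_deriv (j : ℕ) (hj : 1 ≤ j) (x : ℝ) :
    ∑ b ∈ Finset.Icc 1 j, (stirling2 j b : ℝ) * (Nat.factorial (b - 1))
        * (b * x ^ (b - 1) * (x * (1 + x)))
      = ∑ b ∈ Finset.Icc 1 (j + 1),
          (stirling2 (j + 1) b : ℝ) * (Nat.factorial (b - 1)) * x ^ b := by
  obtain ⟨m, rfl⟩ : ∃ m, j = m + 1 := ⟨j - 1, by omega⟩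
  rw [sum_Icc_one_eq_sum_range, sum_Icc_one_eq_sum_range]
  simp only [Nat.add_sub_cancel]
  have LHS_eq : ∑ b ∈ Finset.range (m + 1),
        (stirling2 (m + 1) (b + 1) : ℝ) * (Nat.factorial b : ℝ)
          * (((b + 1 : ℕ) : ℝ) * x ^ b * (x * (1 + x)))
      = (∑ b ∈ Finset.range (m + 1),
          ((b : ℝ) + 1) * (stirling2 (m + 1) (b + 1) : ℝ) * (Nat.factorial b : ℝ) * x ^ (b + 1))
        + ∑ b ∈ Finset.range (m + 1),
          (stirling2 (m + 1) (b + 1) : ℝ) * (Nat.factorial (b + 1) : ℝ) * x ^ (b + 2) := by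
    rw [← Finset.sum_add_distrib]
    refine Finset.sum_congr rfl fun b _ => ?_
    rw [Nat.factorial_succ]
    push_cast
    ring
  have RHS_eq : ∑ b ∈ Finset.range (m + 1 + 1),
        (stirling2 (m + 1 + 1) (b + 1) : ℝ) * (Nat.factorial b : ℝ) * x ^ (b + 1)
      = (∑ b ∈ Finset.range (m + 1 + 1),
          ((b : ℝ) + 1) * (stirling2 (m + 1) (b + 1) : ℝ) * (Nat.factorial b : ℝ) * x ^ (b + 1))
        + ∑ b ∈ Finset.range (m + 1 + 1),
          (stirling2 (m + 1) b : ℝ) * (Nat.factorial b : ℝ) * x ^ (b + 1) := by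
    rw [← Finset.sum_add_distrib]
    refine Finset.sum_congr rfl fun b _ => ?_
    rw [stirling2_succ_succ]
    push_cast
    ring
  rw [LHS_eq, RHS_eq]
  congr 1
  · rw [Finset.sum_range_succ (fun b => ((b : ℝ) + 1) * (stirling2 (m + 1) (b + 1) : ℝ)
        * (Nat.factorial b : ℝ) * x ^ (b + 1)) (m + 1),
      stirling2_eq_zero (show m + 1 < m + 1 + 1 by omega)]
    simp
  · rw [Finset.sum_range_succ' (fun b =>
      (stirling2 (m + 1) b : ℝ) * (Nat.factorial b : ℝ) * x ^ (b + 1)) (m + 1),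
      stirling2_succ_zero]
    simp only [Nat.cast_zero, zero_mul, add_zero]


section
open Set

lemma hasSum_negBinomial {a x : ℝ} (ha : 0 < a) (hx0 : 0 ≤ x) (hx1 : x < 1) :
    HasSum (fun k : ℕ => Real.Gamma (a + k) / (Real.Gamma a * (Nat.factorial k)) * x ^ k)
      ((1 - x) ^ (-a)) := by
  have hΓa : 0 < Real.Gamma a := Real.Gamma_pos_of_pos ha
  have hr : 0 < 1 - x := by linarith
  set c : ℕ → ℝ := fun k => Real.Gamma (a + k) / (Real.Gamma a * (Nat.factorial k)) * x ^ k
    with hcdef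
  have hc0 : ∀ k, 0 ≤ c k := by
    intro k
    have : 0 < Real.Gamma (a + k) := Real.Gamma_pos_of_pos (by positivity)
    have hf : (0:ℝ) < (Nat.factorial k : ℝ) := by exact_mod_cast k.factorial_pos
    positivity
  -- the final real integrand
  set J : ℝ → ℝ := fun t => t ^ (a - 1) * Real.exp (-((1 - x) * t)) / Real.Gamma a with hJdef
  have hintJ : IntegrableOn J (Ioi 0) := by
    have h1 : IntegrableOn (fun t : ℝ => Real.exp (-t) * t ^ (a - 1)) (Ioi 0) :=
      Real.GammaIntegral_convergent ha
    have h2 : IntegrableOn (fun t : ℝ => Real.exp (-((1 - x) * t)) * ((1 - x) * t) ^ (a - 1))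
        (Ioi 0) := by
      have := (integrableOn_Ioi_comp_mul_left_iff
        (fun t : ℝ => Real.exp (-t) * t ^ (a - 1)) 0 hr).mpr
      rw [mul_zero] at this
      exact this h1
    have h3 : IntegrableOn (fun t : ℝ =>
        ((1 - x) ^ (1 - a) / Real.Gamma a) * (Real.exp (-((1 - x) * t)) * ((1 - x) * t) ^ (a - 1)))
        (Ioi 0) := h2.const_mul _
    refine h3.congr_fun (fun t ht => ?_) measurableSet_Ioi
    have ht0 : (0:ℝ) < t := ht
    dsimp only
    rw [Real.mul_rpow hr.le ht0.le]
    have h4 : (1 - x) ^ (1 - a) * (1 - x) ^ (a - 1) = 1 := by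
      rw [← Real.rpow_add hr]
      norm_num
    show _ = t ^ (a - 1) * Real.exp (-((1 - x) * t)) / Real.Gamma a
    rw [div_mul_eq_mul_div]
    rw [show (1 - x) ^ (1 - a) * (Real.exp (-((1 - x) * t)) * ((1 - x) ^ (a - 1) * t ^ (a - 1)))
      = ((1 - x) ^ (1 - a) * (1 - x) ^ (a - 1)) * (Real.exp (-((1 - x) * t)) * t ^ (a - 1)) by ring]
    rw [h4]
    ring
  have hJ0 : 0 ≤ᵐ[volume.restrict (Ioi 0)] J := by
    filter_upwards [ae_restrict_mem measurableSet_Ioi] with t ht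
    have ht0 : (0:ℝ) < t := ht
    have := Real.rpow_pos_of_pos ht0 (a - 1)
    positivity
  have hJval : ∫ t in Ioi 0, J t = (1 - x) ^ (-a) := by
    rw [hJdef]
    simp only [integral_div]
    rw [Real.integral_rpow_mul_exp_neg_mul_Ioi ha hr]
    rw [one_div, Real.inv_rpow hr.le, ← Real.rpow_neg hr.le]
    field_simp
  -- ENNReal-valued term integrands
  have hE : ∑' k, ENNReal.ofReal (c k) = ENNReal.ofReal ((1 - x) ^ (-a)) := by
    have hck : ∀ k : ℕ, ENNReal.ofReal (c k) = ∫⁻ t in Ioi 0,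
        ENNReal.ofReal (Real.exp (-t) * t ^ (a + (k:ℝ) - 1)
          * (x ^ k / (Real.Gamma a * (Nat.factorial k)))) := by
      intro k
      have hint : IntegrableOn (fun t : ℝ => Real.exp (-t) * t ^ (a + (k:ℝ) - 1)
          * (x ^ k / (Real.Gamma a * (Nat.factorial k)))) (Ioi 0) :=
        (Real.GammaIntegral_convergent (by positivity : (0:ℝ) < a + k)).mul_const _
      have hnn : 0 ≤ᵐ[volume.restrict (Ioi 0)] fun t : ℝ => Real.exp (-t) * t ^ (a + (k:ℝ) - 1)
          * (x ^ k / (Real.Gamma a * (Nat.factorial k))) := by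
        filter_upwards [ae_restrict_mem measurableSet_Ioi] with t ht
        have ht0 : (0:ℝ) < t := ht
        have h1 := Real.rpow_pos_of_pos ht0 (a + (k:ℝ) - 1)
        have hf : (0:ℝ) < (Nat.factorial k : ℝ) := by exact_mod_cast k.factorial_pos
        positivity
      rw [← ofReal_integral_eq_lintegral_ofReal hint hnn]
      congr 1
      rw [integral_mul_const, ← Real.Gamma_eq_integral (by positivity : (0:ℝ) < a + k)]
      show Real.Gamma (a + ↑k) / (Real.Gamma a * ↑(Nat.factorial k)) * x ^ k = _
      have hf : ((Nat.factorial k : ℝ)) ≠ 0 := by positivity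
      field_simp
    calc ∑' k, ENNReal.ofReal (c k)
        = ∑' k : ℕ, ∫⁻ t in Ioi 0, ENNReal.ofReal (Real.exp (-t) * t ^ (a + (k:ℝ) - 1)
            * (x ^ k / (Real.Gamma a * (Nat.factorial k)))) := tsum_congr hck
      _ = ∫⁻ t in Ioi 0, ∑' k : ℕ, ENNReal.ofReal (Real.exp (-t) * t ^ (a + (k:ℝ) - 1)
            * (x ^ k / (Real.Gamma a * (Nat.factorial k)))) := by
          refine (lintegral_tsum fun k => ?_).symm
          refine (Measurable.ennreal_ofReal ?_).aemeasurable
          have : Measurable (fun t : ℝ => t ^ (a + (k:ℝ) - 1)) := by fun_prop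
          exact ((Real.measurable_exp.comp measurable_neg).mul this).mul_const _
      _ = ∫⁻ t in Ioi 0, ENNReal.ofReal (J t) := by
          refine lintegral_congr_ae ?_
          filter_upwards [ae_restrict_mem measurableSet_Ioi] with t ht
          have ht0 : (0:ℝ) < t := ht
          have hterm : ∀ k : ℕ, Real.exp (-t) * t ^ (a + (k:ℝ) - 1)
              * (x ^ k / (Real.Gamma a * (Nat.factorial k)))
              = (Real.exp (-t) * t ^ (a - 1) / Real.Gamma a) * ((x * t) ^ k / (Nat.factorial k)) := by
            intro k
            rw [show a + (k:ℝ) - 1 = (a - 1) + (k:ℝ) by ring, Real.rpow_add ht0,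
              Real.rpow_natCast, mul_pow]
            have hf : ((Nat.factorial k : ℝ)) ≠ 0 := by positivity
            field_simp
          have hs : HasSum (fun k : ℕ => (Real.exp (-t) * t ^ (a - 1) / Real.Gamma a)
              * ((x * t) ^ k / (Nat.factorial k)))
              ((Real.exp (-t) * t ^ (a - 1) / Real.Gamma a) * Real.exp (x * t)) := by
            have h := NormedSpace.expSeries_div_hasSum_exp (x * t)
            rw [← Real.exp_eq_exp_ℝ] at h
            exact h.mul_left _
          have hnn : ∀ k : ℕ, 0 ≤ (Real.exp (-t) * t ^ (a - 1) / Real.Gamma a)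
              * ((x * t) ^ k / (Nat.factorial k)) := by
            intro k
            have h1 := Real.rpow_pos_of_pos ht0 (a - 1)
            have hf : (0:ℝ) < (Nat.factorial k : ℝ) := by exact_mod_cast k.factorial_pos
            have hxt : 0 ≤ x * t := by positivity
            positivity
          calc ∑' k : ℕ, ENNReal.ofReal (Real.exp (-t) * t ^ (a + (k:ℝ) - 1)
                * (x ^ k / (Real.Gamma a * (Nat.factorial k))))
              = ∑' k : ℕ, ENNReal.ofReal ((Real.exp (-t) * t ^ (a - 1) / Real.Gamma a)
                * ((x * t) ^ k / (Nat.factorial k))) := tsum_congr fun k => by rw [hterm k]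
            _ = ENNReal.ofReal (∑' k, (Real.exp (-t) * t ^ (a - 1) / Real.Gamma a)
                * ((x * t) ^ k / (Nat.factorial k))) :=
                (ENNReal.ofReal_tsum_of_nonneg hnn hs.summable).symm
            _ = ENNReal.ofReal (J t) := by
                rw [hs.tsum_eq]
                congr 1
                show _ = t ^ (a - 1) * Real.exp (-((1 - x) * t)) / Real.Gamma a
                rw [show -((1 - x) * t) = x * t + -t by ring, Real.exp_add]
                ring
      _ = ENNReal.ofReal ((1 - x) ^ (-a)) := by
          rw [← ofReal_integral_eq_lintegral_ofReal hintJ hJ0, hJval]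
  -- conclude
  have hne : ∑' k, ENNReal.ofReal (c k) ≠ ⊤ := by
    rw [hE]; exact ENNReal.ofReal_ne_top
  have hsumm : Summable c := by
    have h := ENNReal.summable_toReal hne
    refine h.congr fun k => ?_
    rw [ENNReal.toReal_ofReal (hc0 k)]
  refine hsumm.hasSum_iff.mpr ?_
  have h1 : (∑' k, ENNReal.ofReal (c k)).toReal = ∑' k, c k := by
    rw [ENNReal.tsum_toReal_eq (fun k => ENNReal.ofReal_ne_top)]
    exact tsum_congr fun k => ENNReal.toReal_ofReal (hc0 k)
  rw [← h1, hE, ENNReal.toReal_ofReal (Real.rpow_pos_of_pos hr (-a)).le]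

lemma mgf_negBinomial {Ω : Type*} [MeasurableSpace Ω] (μ : Measure Ω)
    [IsProbabilityMeasure μ] (a p : ℝ) (ha : 0 < a) (hp0 : 0 < p) (hp1 : p < 1)
    (N : Ω → ℕ)
    (hN : ∀ k : ℕ, μ {ω | N ω = k} =
      ENNReal.ofReal (Real.Gamma (a + k) / (Real.Gamma a * Nat.factorial k)
        * (1 - p) ^ a * p ^ k))
    {t : ℝ} (ht : p * Real.exp t < 1) :
    mgf (fun ω => (N ω : ℝ)) μ t = (1 - p) ^ a * (1 - p * Real.exp t) ^ (-a) := by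
  classical
  have hr : 0 < 1 - p := by linarith
  set pmf : ℕ → ℝ := fun k => Real.Gamma (a + k) / (Real.Gamma a * Nat.factorial k)
      * (1 - p) ^ a * p ^ k with hpmfdef
  have hpmf0 : ∀ k, 0 ≤ pmf k := by
    intro k
    have h1 : 0 < Real.Gamma (a + k) := Real.Gamma_pos_of_pos (by positivity)
    have h2 : 0 < Real.Gamma a := Real.Gamma_pos_of_pos ha
    have h3 : (0:ℝ) < Nat.factorial k := by exact_mod_cast k.factorial_pos
    have h4 : (0:ℝ) < (1 - p) ^ a := Real.rpow_pos_of_pos hr a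
    positivity
  have hpmfsum : HasSum pmf 1 := by
    have h := (hasSum_negBinomial ha hp0.le hp1).mul_right ((1 - p) ^ a)
    have hval : (1 - p) ^ (-a) * (1 - p) ^ a = 1 := by
      rw [← Real.rpow_add hr]
      norm_num
    rw [hval] at h
    exact h.congr_fun fun k => by simp only [hpmfdef]; ring
  have hsum_exp : HasSum (fun k => pmf k * Real.exp (t * k))
      ((1 - p) ^ a * (1 - p * Real.exp t) ^ (-a)) := by
    have hx0 : 0 ≤ p * Real.exp t := by positivity
    have h := (hasSum_negBinomial ha hx0 ht).mul_left ((1 - p) ^ a)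
    refine h.congr_fun fun k => ?_
    show pmf k * Real.exp (t * k) = (1 - p) ^ a * (Real.Gamma (a + k)
        / (Real.Gamma a * Nat.factorial k) * (p * Real.exp t) ^ k)
    rw [hpmfdef, mul_pow, mul_comm t (k:ℝ), Real.exp_nat_mul]
    ring
  set A : ℕ → Set Ω := fun k => {ω | N ω = k} with hAdef
  have hAcover : ⋃ k, A k = univ := by
    ext ω
    simp only [mem_iUnion, mem_univ, iff_true, hAdef, mem_setOf_eq]
    exact ⟨N ω, rfl⟩
  set E : ℕ → Set Ω := fun k => toMeasurable μ (A k) with hEdef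
  have hEmeas : ∀ k, MeasurableSet (E k) := fun k => measurableSet_toMeasurable μ (A k)
  have hAE : ∀ k, A k ⊆ E k := fun k => subset_toMeasurable μ (A k)
  have hEA : ∀ k, μ (E k) = μ (A k) := fun k => measure_toMeasurable (A k)
  set B : ℕ → Set Ω := disjointed E with hBdef
  have hBmeas : ∀ k, MeasurableSet (B k) := MeasurableSet.disjointed hEmeas
  have hBdisj : Pairwise (Function.onFun Disjoint B) := disjoint_disjointed E
  have hBsub : ∀ k, B k ⊆ E k := disjointed_subset E
  have hBcover : ⋃ k, B k = univ := by
    rw [hBdef, iUnion_disjointed]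
    exact eq_univ_of_univ_subset (hAcover ▸ iUnion_mono hAE)
  have hsumB : ∑' k, μ (B k) = 1 := by
    rw [← measure_iUnion hBdisj hBmeas, hBcover, measure_univ]
  have hsumA : ∑' k, μ (A k) = 1 := by
    have h1 : ∀ k, μ (A k) = ENNReal.ofReal (pmf k) := fun k => hN k
    rw [tsum_congr h1, ← ENNReal.ofReal_tsum_of_nonneg hpmf0 hpmfsum.summable,
      hpmfsum.tsum_eq, ENNReal.ofReal_one]
  have hBA : ∀ k, μ (B k) = μ (A k) := by
    have hle : ∀ k, μ (B k) ≤ μ (A k) := fun k => (hEA k) ▸ measure_mono (hBsub k)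
    by_contra hcon
    push_neg at hcon
    obtain ⟨k, hk⟩ := hcon
    have hlt : μ (B k) < μ (A k) := lt_of_le_of_ne (hle k) hk
    have := ENNReal.tsum_lt_tsum (hsumB ▸ ENNReal.one_ne_top) hle hlt
    rw [hsumB, hsumA] at this
    exact lt_irrefl _ this
  have hnull : ∀ k, μ (E k \ B k) = 0 := by
    intro k
    rw [measure_diff (hBsub k) (hBmeas k).nullMeasurableSet (measure_ne_top μ _),
      hEA, ← hBA, tsub_self]
  have hexB : ∀ ω, ∃ k, ω ∈ B k := by
    intro ω
    have : ω ∈ ⋃ k, B k := hBcover.symm ▸ mem_univ ω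
    exact mem_iUnion.mp this
  set M : Ω → ℕ := fun ω => Nat.find (hexB ω) with hMdef
  have hMspec : ∀ ω, ω ∈ B (M ω) := fun ω => Nat.find_spec (hexB ω)
  have hMB : ∀ ω k, ω ∈ B k → M ω = k := by
    intro ω k hk
    by_contra hne
    exact Set.disjoint_left.mp (hBdisj hne) (hMspec ω) hk
  have hMpre : ∀ k, M ⁻¹' {k} = B k := by
    intro k
    ext ω
    simp only [mem_preimage, mem_singleton_iff]
    exact ⟨fun h => h ▸ hMspec ω, fun h => hMB ω k h⟩
  have hMmeas : Measurable M := measurable_to_nat fun ω => by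
    rw [hMpre]; exact hBmeas _
  have haeNM : ∀ᵐ ω ∂μ, N ω = M ω := by
    rw [ae_iff]
    refine measure_mono_null ?_ (measure_iUnion_null fun k => hnull k)
    intro ω hω
    refine mem_iUnion.mpr ⟨N ω, hAE (N ω) rfl, fun hB => hω ?_⟩
    exact (hMB ω (N ω) hB).symm
  -- the function exp(t * M)
  set g : Ω → ℝ := fun ω => Real.exp (t * (M ω : ℝ)) with hgdef
  have hgmeas : Measurable g := by
    have h1 : Measurable (fun k : ℕ => Real.exp (t * (k : ℝ))) := by fun_prop
    exact h1.comp hMmeas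
  have hlint : ∫⁻ ω, ENNReal.ofReal (g ω) ∂μ
      = ∑' k : ℕ, ENNReal.ofReal (Real.exp (t * (k : ℝ))) * μ (B k) := by
    rw [← setLIntegral_univ, ← hBcover, lintegral_iUnion hBmeas hBdisj]
    refine tsum_congr fun k => ?_
    have hcongr : ∀ᵐ ω ∂μ, ω ∈ B k →
        ENNReal.ofReal (g ω) = ENNReal.ofReal (Real.exp (t * (k : ℝ))) := by
      refine ae_of_all _ fun ω hω => ?_
      simp only [hgdef]
      rw [hMB ω k hω]
    rw [setLIntegral_congr_fun_ae (hBmeas k) hcongr, setLIntegral_const]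
  have hkey : ∑' k : ℕ, ENNReal.ofReal (Real.exp (t * (k : ℝ))) * μ (B k)
      = ENNReal.ofReal ((1 - p) ^ a * (1 - p * Real.exp t) ^ (-a)) := by
    have h1 : ∀ k : ℕ, ENNReal.ofReal (Real.exp (t * (k : ℝ))) * μ (B k)
        = ENNReal.ofReal (pmf k * Real.exp (t * (k : ℝ))) := by
      intro k
      rw [hBA, hN, ← ENNReal.ofReal_mul (Real.exp_pos _).le, mul_comm]
    rw [tsum_congr h1, ← ENNReal.ofReal_tsum_of_nonneg
      (fun k => mul_nonneg (hpmf0 k) (Real.exp_pos _).le) hsum_exp.summable,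
      hsum_exp.tsum_eq]
  have hint : Integrable g μ := by
    refine ⟨hgmeas.aestronglyMeasurable, ?_⟩
    rw [hasFiniteIntegral_iff_ofReal (ae_of_all _ fun ω => (Real.exp_pos _).le), hlint, hkey]
    exact ENNReal.ofReal_lt_top
  have hI : ∫ ω, g ω ∂μ = (1 - p) ^ a * (1 - p * Real.exp t) ^ (-a) := by
    rw [← setIntegral_univ, ← hBcover, integral_iUnion hBmeas hBdisj
      (hBcover ▸ integrableOn_univ.mpr hint)]
    have h2 : ∀ k : ℕ, ∫ ω in B k, g ω ∂μ = pmf k * Real.exp (t * (k : ℝ)) := by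
      intro k
      have hcongr : Set.EqOn g (fun _ => Real.exp (t * (k : ℝ))) (B k) := by
        intro ω hω
        simp only [hgdef]
        rw [hMB ω k hω]
      rw [setIntegral_congr_fun (hBmeas k) hcongr, setIntegral_const, measureReal_def, hBA, hN, smul_eq_mul,
        ENNReal.toReal_ofReal (hpmf0 k), mul_comm]
    rw [tsum_congr h2, hsum_exp.tsum_eq]
  rw [← hI]
  show (∫ ω, Real.exp (t * (N ω : ℝ)) ∂μ) = ∫ ω, g ω ∂μ
  refine integral_congr_ae ?_
  filter_upwards [haeNM] with ω hω
  simp only [hgdef]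
  rw [hω]

end

/-- If `N` is negative binomial with parameters `a > 0` and `p ∈ (0,1)`, then for every
`i ≥ 1` the `i`-th cumulant of `N` (the `i`-th derivative at `0` of the cumulant generating
function) equals `a ⬝ Li_{1-i}(p) = a ⬝ ∑_{l ≥ 1} l^(i-1) p^l`, which also equals
`a ⬝ ∑_{b=1}^i S(i,b) (b-1)! (p/(1-p))^b`. -/
theorem negBinomial_cumulant {Ω : Type*} [MeasurableSpace Ω] (μ : Measure Ω)
    [IsProbabilityMeasure μ] (a p : ℝ) (ha : 0 < a) (hp0 : 0 < p) (hp1 : p < 1)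
    (N : Ω → ℕ)
    (hN : ∀ k : ℕ, μ {ω | N ω = k} =
      ENNReal.ofReal (Real.Gamma (a + k) / (Real.Gamma a * Nat.factorial k)
        * (1 - p) ^ a * p ^ k))
    (i : ℕ) (hi : 1 ≤ i) :
    iteratedDeriv i (cgf (fun ω => (N ω : ℝ)) μ) 0
        = a * ∑' l : ℕ, ((l : ℝ) + 1) ^ (i - 1) * p ^ (l + 1)
      ∧ iteratedDeriv i (cgf (fun ω => (N ω : ℝ)) μ) 0
        = a * ∑ b ∈ Finset.Icc 1 i,
            (stirling2 i b : ℝ) * Nat.factorial (b - 1) * (p / (1 - p)) ^ b := by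
  have hr : 0 < 1 - p := by linarith
  set c : ℝ := -Real.log p with hcdef
  have hc : 0 < c := by
    rw [hcdef, neg_pos]
    exact Real.log_neg hp0 hp1
  have hUt : ∀ t ∈ Set.Iio c, p * Real.exp t < 1 := by
    intro t ht
    have h1 : Real.exp t < Real.exp c := Real.exp_lt_exp.mpr ht
    have hec : Real.exp c = p⁻¹ := by rw [hcdef, Real.exp_neg, Real.exp_log hp0]
    have h2 : p * Real.exp t < p * p⁻¹ := by
      refine mul_lt_mul_of_pos_left ?_ hp0
      rw [← hec]; exact h1
    rwa [mul_inv_cancel₀ hp0.ne'] at h2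
  have hmgf : ∀ t ∈ Set.Iio c, mgf (fun ω => (N ω : ℝ)) μ t
      = (1 - p) ^ a * (1 - p * Real.exp t) ^ (-a) :=
    fun t ht => mgf_negBinomial μ a p ha hp0 hp1 N hN (hUt t ht)
  set g : ℝ → ℝ := fun t => a * Real.log (1 - p) - a * Real.log (1 - p * Real.exp t) with hgdef
  have hcgf : ∀ t ∈ Set.Iio c, cgf (fun ω => (N ω : ℝ)) μ t = g t := by
    intro t ht
    have hd : 0 < 1 - p * Real.exp t := by linarith [hUt t ht]
    show Real.log (mgf (fun ω => (N ω : ℝ)) μ t) = g t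
    rw [hmgf t ht, Real.log_mul (Real.rpow_pos_of_pos hr a).ne'
      (Real.rpow_pos_of_pos hd (-a)).ne', Real.log_rpow hr, Real.log_rpow hd, hgdef]
    ring
  set u : ℝ → ℝ := fun t => p * Real.exp t / (1 - p * Real.exp t) with hudef
  have hu : ∀ t ∈ Set.Iio c, HasDerivAt u (u t * (1 + u t)) t := by
    intro t ht
    have hd : 0 < 1 - p * Real.exp t := by linarith [hUt t ht]
    have h1 : HasDerivAt (fun s => p * Real.exp s) (p * Real.exp t) t :=
      (Real.hasDerivAt_exp t).const_mul p
    have h2 : HasDerivAt (fun s => 1 - p * Real.exp s) (-(p * Real.exp t)) t := by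
      simpa using ((Real.hasDerivAt_exp t).const_mul p).const_sub 1
    have h3 := h1.div h2 hd.ne'
    convert h3 using 1
    · rfl
    · rfl
    · rfl
    simp only [hudef]
    field_simp
    ring
  have hG1 : ∀ t ∈ Set.Iio c, HasDerivAt g (a * u t) t := by
    intro t ht
    have hd : 0 < 1 - p * Real.exp t := by linarith [hUt t ht]
    have h2 : HasDerivAt (fun s => 1 - p * Real.exp s) (-(p * Real.exp t)) t := by
      simpa using ((Real.hasDerivAt_exp t).const_mul p).const_sub 1
    have h4 : HasDerivAt (fun s => Real.log (1 - p * Real.exp s))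
        (-(p * Real.exp t) / (1 - p * Real.exp t)) t := h2.log hd.ne'
    have h5 := (hasDerivAt_const t (a * Real.log (1 - p))).sub (h4.const_mul a)
    have h6 : HasDerivAt g (0 - a * (-(p * Real.exp t) / (1 - p * Real.exp t))) t := h5
    convert h6 using 1
    simp only [hudef]
    field_simp
    ring
  have key : ∀ j, 1 ≤ j → ∀ t ∈ Set.Iio c, iteratedDeriv j g t
      = a * ∑ b ∈ Finset.Icc 1 j,
          (stirling2 j b : ℝ) * (Nat.factorial (b - 1)) * (u t) ^ b := by
    intro j hj
    induction j, hj using Nat.le_induction with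
    | base =>
      intro t ht
      rw [iteratedDeriv_one, (hG1 t ht).deriv, Finset.Icc_self, Finset.sum_singleton]
      norm_num [show stirling2 1 1 = 1 from rfl]
    | succ j hj ih =>
      intro t ht
      rw [iteratedDeriv_succ]
      have hev : iteratedDeriv j g =ᶠ[nhds t] (fun s => a * ∑ b ∈ Finset.Icc 1 j,
          (stirling2 j b : ℝ) * (Nat.factorial (b - 1)) * (u s) ^ b) := by
        filter_upwards [Iio_mem_nhds ht] with s hs using ih s hs
      rw [hev.deriv_eq]
      have hder : HasDerivAt (fun s => a * ∑ b ∈ Finset.Icc 1 j,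
          (stirling2 j b : ℝ) * (Nat.factorial (b - 1)) * (u s) ^ b)
          (a * ∑ b ∈ Finset.Icc 1 j, (stirling2 j b : ℝ) * (Nat.factorial (b - 1))
            * ((b : ℝ) * (u t) ^ (b - 1) * (u t * (1 + u t)))) t := by
        refine HasDerivAt.const_mul a ?_
        refine HasDerivAt.fun_sum fun b hb => ?_
        exact ((hu t ht).pow b).const_mul _
      rw [hder.deriv]
      congr 1
      rw [← stirling2_sum_deriv j hj (u t)]
  have hev0 : cgf (fun ω => (N ω : ℝ)) μ =ᶠ[nhds 0] g := by
    filter_upwards [Iio_mem_nhds hc] with s hs using hcgf s hs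
  have hiter : iteratedDeriv i (cgf (fun ω => (N ω : ℝ)) μ) 0
      = a * ∑ b ∈ Finset.Icc 1 i,
          (stirling2 i b : ℝ) * (Nat.factorial (b - 1)) * (u 0) ^ b := by
    rw [hev0.iteratedDeriv_eq i]
    exact key i hi 0 hc
  have hu0 : u 0 = p / (1 - p) := by simp [hudef]
  refine ⟨?_, ?_⟩
  · rw [hiter, hu0, ← tsum_pow_eq_sum_stirling2 hp0 hp1 hi]
  · rw [hiter, hu0]
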